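/- Let ‖·‖ be a norm on ℝ^d and let f : ℝ^d → ℝ be Lipschitz with respect to ‖·‖ and subdifferentiable at every point. Then f is ρ-weakly convex with respect to ‖·‖ if and only if for all w, v ∈ ℝ^d and every g in the regular subdifferential ∂f(w) it holds that f(v) ≥ f(w) + ⟨g, v − w⟩ − (ρ/2)‖v − w‖². -/

import Mathlib

set_option maxHeartbeats 1000000


open Set Filter

/-- `Nm` is a norm on `ℝ^d`. -/
def IsNorm {d : ℕ} (Nm : EuclideanSpace ℝ (Fin d) → ℝ) : Prop :=
  (∀ x, Nm x = 0 ↔ x = 0) ∧ (∀ (a : ℝ) (x), Nm (a • x) = |a| * Nm x) ∧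
    ∀ x y, Nm (x + y) ≤ Nm x + Nm y

/-- `f` is `ρ`-weakly convex on `W` w.r.t. the norm `Nm`. -/
def WeaklyConvexOn {d : ℕ} (Nm : EuclideanSpace ℝ (Fin d) → ℝ) (ρ : ℝ)
    (W : Set (EuclideanSpace ℝ (Fin d))) (f : EuclideanSpace ℝ (Fin d) → ℝ) : Prop :=
  ∀ w ∈ W, ∀ v ∈ W, ∀ l : ℝ, 0 ≤ l → l ≤ 1 →
    f (l • w + (1 - l) • v) ≤ l * f w + (1 - l) * f v + ρ * l * (1 - l) / 2 * Nm (w - v) ^ 2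

/-- The regular subdifferential of `f` at `w` w.r.t. the norm `Nm`. -/
noncomputable def RegSubdiff {d : ℕ} (Nm : EuclideanSpace ℝ (Fin d) → ℝ)
    (f : EuclideanSpace ℝ (Fin d) → ℝ) (w : EuclideanSpace ℝ (Fin d)) :
    Set (EuclideanSpace ℝ (Fin d)) :=
  {g | 0 ≤ liminf (fun v => (f v - f w - (inner ℝ g (v - w) : ℝ)) / Nm (v - w))
        (nhdsWithin w {w}ᶜ)}

section aux
variable {d : ℕ} {Nm : EuclideanSpace ℝ (Fin d) → ℝ}

lemma IsNorm.zero (hNm : IsNorm Nm) : Nm 0 = 0 := (hNm.1 0).mpr rfl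

lemma IsNorm.nonneg (hNm : IsNorm Nm) (x : EuclideanSpace ℝ (Fin d)) : 0 ≤ Nm x := by
  have h1 : Nm ((-1 : ℝ) • x) = Nm x := by rw [hNm.2.1]; norm_num
  have h2 := hNm.2.2 x ((-1 : ℝ) • x)
  have h3 : x + (-1 : ℝ) • x = 0 := by module
  rw [h3, hNm.zero, h1] at h2
  linarith

lemma IsNorm.neg (hNm : IsNorm Nm) (x : EuclideanSpace ℝ (Fin d)) : Nm (-x) = Nm x := by
  have h1 : Nm ((-1 : ℝ) • x) = Nm x := by rw [hNm.2.1]; norm_num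
  simpa using h1

lemma IsNorm.sub_comm (hNm : IsNorm Nm) (x y : EuclideanSpace ℝ (Fin d)) :
    Nm (x - y) = Nm (y - x) := by rw [← hNm.neg (x - y)]; congr 1; abel

lemma IsNorm.pos (hNm : IsNorm Nm) {x : EuclideanSpace ℝ (Fin d)} (hx : x ≠ 0) : 0 < Nm x :=
  lt_of_le_of_ne (hNm.nonneg x) (fun h => hx ((hNm.1 x).mp h.symm))

lemma IsNorm.upper (hNm : IsNorm Nm) : ∃ C : ℝ, 0 ≤ C ∧ ∀ x, Nm x ≤ C * ‖x‖ := by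
  refine ⟨∑ i : Fin d, Nm (EuclideanSpace.single i 1),
    Finset.sum_nonneg (fun i _ => hNm.nonneg _), fun x => ?_⟩
  have hx : x = ∑ i : Fin d, x i • EuclideanSpace.single i (1 : ℝ) := by
    ext j
    rw [WithLp.ofLp_sum, Finset.sum_apply]
    simp [EuclideanSpace.single_apply]
  have hsum : ∀ (s : Finset (Fin d)),
      Nm (∑ i ∈ s, x i • EuclideanSpace.single i (1 : ℝ)) ≤
        ∑ i ∈ s, Nm (x i • EuclideanSpace.single i (1 : ℝ)) := by
    intro s
    induction s using Finset.induction_on with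
    | empty => simp [hNm.zero]
    | insert _ _ hni ih =>
      rename_i a s
      rw [Finset.sum_insert hni, Finset.sum_insert hni]
      exact le_trans (hNm.2.2 _ _) (by linarith)
  have habs : ∀ i : Fin d, |x i| ≤ ‖x‖ := by
    intro i
    rw [EuclideanSpace.norm_eq]
    calc |x i| = Real.sqrt (‖x i‖ ^ 2) := by rw [Real.sqrt_sq_eq_abs]; simp
    _ ≤ _ := by
        apply Real.sqrt_le_sqrt
        exact Finset.single_le_sum (f := fun i => ‖x i‖ ^ 2)
          (fun i _ => sq_nonneg _) (Finset.mem_univ i)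
  calc Nm x ≤ ∑ i : Fin d, Nm (x i • EuclideanSpace.single i (1 : ℝ)) := by
        conv_lhs => rw [hx]
        exact hsum Finset.univ
    _ = ∑ i : Fin d, |x i| * Nm (EuclideanSpace.single i (1 : ℝ)) := by
        simp [hNm.2.1]
    _ ≤ ∑ i : Fin d, ‖x‖ * Nm (EuclideanSpace.single i (1 : ℝ)) := by
        apply Finset.sum_le_sum
        intro i _
        exact mul_le_mul_of_nonneg_right (habs i) (hNm.nonneg _)
    _ = _ := by rw [← Finset.mul_sum, mul_comm]

lemma IsNorm.continuous (hNm : IsNorm Nm) : Continuous Nm := by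
  obtain ⟨C, hC0, hC⟩ := hNm.upper
  apply Metric.continuous_iff.mpr
  intro x ε hε
  refine ⟨ε / (C + 1), by positivity, fun y hy => ?_⟩
  have h1 : Nm y ≤ Nm x + Nm (y - x) := by
    have := hNm.2.2 x (y - x); simpa using this
  have h2 : Nm x ≤ Nm y + Nm (x - y) := by
    have := hNm.2.2 y (x - y); simpa using this
  have h3 : Nm (y - x) ≤ C * ‖y - x‖ := hC _
  have h4 : Nm (x - y) ≤ C * ‖x - y‖ := hC _
  have h5 : ‖y - x‖ < ε / (C + 1) := by rwa [← dist_eq_norm]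
  have h6 : ‖x - y‖ = ‖y - x‖ := norm_sub_rev x y
  have h7 : C * (ε / (C + 1)) < ε := by
    rw [mul_div_assoc', div_lt_iff₀ (by positivity)]
    nlinarith
  have h8 : C * ‖y - x‖ ≤ C * (ε / (C + 1)) := mul_le_mul_of_nonneg_left h5.le hC0
  rw [Real.dist_eq, abs_sub_lt_iff]
  constructor <;> nlinarith

lemma IsNorm.lower (hNm : IsNorm Nm) : ∃ c : ℝ, 0 < c ∧ ∀ x, c * ‖x‖ ≤ Nm x := by
  by_cases hd : ∃ x : EuclideanSpace ℝ (Fin d), x ≠ 0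
  case neg =>
    push_neg at hd
    exact ⟨1, one_pos, fun x => by simp [hd x, hNm.zero]⟩
  obtain ⟨x₀, hx₀⟩ := hd
  have hsne : (Metric.sphere (0 : EuclideanSpace ℝ (Fin d)) 1).Nonempty :=
    ⟨‖x₀‖⁻¹ • x₀, by
      simp [norm_smul, abs_inv, inv_mul_cancel₀ (norm_ne_zero_iff.mpr hx₀)]⟩
  obtain ⟨u₀, hu₀mem, hu₀min⟩ := (isCompact_sphere (0 : EuclideanSpace ℝ (Fin d)) 1).exists_isMinOn
    hsne (hNm.continuous.continuousOn)
  have hu₀ : u₀ ≠ 0 := by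
    intro h
    rw [h] at hu₀mem
    simp at hu₀mem
  refine ⟨Nm u₀, hNm.pos hu₀, fun x => ?_⟩
  by_cases hx : x = 0
  · simp [hx, hNm.zero]
  · have hmem : ‖x‖⁻¹ • x ∈ Metric.sphere (0 : EuclideanSpace ℝ (Fin d)) 1 := by
      simp [norm_smul, abs_inv, inv_mul_cancel₀ (norm_ne_zero_iff.mpr hx)]
    have h1 : Nm u₀ ≤ Nm (‖x‖⁻¹ • x) := hu₀min hmem
    have h2 : Nm (‖x‖⁻¹ • x) = ‖x‖⁻¹ * Nm x := by
      rw [hNm.2.1, abs_inv, abs_norm]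
    rw [h2] at h1
    have hxpos : 0 < ‖x‖ := norm_pos_iff.mpr hx
    have h3 := mul_le_mul_of_nonneg_right h1 (norm_nonneg x)
    have h4 : ‖x‖⁻¹ * Nm x * ‖x‖ = Nm x := by field_simp
    linarith
end aux


/-- A Lipschitz, everywhere-subdifferentiable `f` is `ρ`-weakly convex iff for all `w, v`
and every `g ∈ ∂f(w)`, `f(v) ≥ f(w) + ⟨g, v − w⟩ − (ρ/2)‖v − w‖²`. -/
theorem stmt_8 (d : ℕ) (Nm : EuclideanSpace ℝ (Fin d) → ℝ) (hNm : IsNorm Nm)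
    (f : EuclideanSpace ℝ (Fin d) → ℝ) (L₀ : ℝ)
    (hlip : ∀ v w, |f v - f w| ≤ L₀ * Nm (v - w))
    (hsub : ∀ w, (RegSubdiff Nm f w).Nonempty) (ρ : ℝ) (hρ : 0 ≤ ρ) :
    WeaklyConvexOn Nm ρ univ f ↔
      ∀ w v : EuclideanSpace ℝ (Fin d), ∀ g ∈ RegSubdiff Nm f w,
        f v ≥ f w + (inner ℝ g (v - w) : ℝ) - ρ / 2 * Nm (v - w) ^ 2 := by
  obtain ⟨c, hc, hcl⟩ := hNm.lower
  constructor
  · intro hwc w v g hg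
    by_cases hvw : v = w
    · subst hvw
      rw [sub_self]
      rw [inner_zero_right, hNm.zero]
      norm_num
    · set N := Nm (v - w) with hNdef
      have hvw' : v - w ≠ 0 := sub_ne_zero.mpr hvw
      have hN : 0 < N := hNm.pos hvw'
      have hnorm : 0 < ‖v - w‖ := norm_pos_iff.mpr hvw'
      set ip := (inner ℝ g (v - w) : ℝ) with hip
      have key : ∀ ε > (0 : ℝ), ip ≤ (f v - f w + ρ / 2 * N ^ 2) + ε := by
        intro ε hε
        set q : EuclideanSpace ℝ (Fin d) → ℝ :=
          fun v' => (f v' - f w - (inner ℝ g (v' - w) : ℝ)) / Nm (v' - w) with hq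
        -- boundedness below of q
        have hbdd : IsBoundedUnder (· ≥ ·) (nhdsWithin w {w}ᶜ) q := by
          refine ⟨-(L₀ + ‖g‖ / c), ?_⟩
          simp only [eventually_map]
          filter_upwards [self_mem_nhdsWithin] with v' hv'
          have hv'w : v' - w ≠ 0 := sub_ne_zero.mpr hv'
          have hp : 0 < Nm (v' - w) := hNm.pos hv'w
          rw [hq, ge_iff_le, le_div_iff₀ hp]
          have ha : -(L₀ * Nm (v' - w)) ≤ f v' - f w := by
            have := abs_le.mp (hlip v' w); linarith [this.1]
          have hb : (inner ℝ g (v' - w) : ℝ) ≤ ‖g‖ * ‖v' - w‖ :=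
            le_trans (le_abs_self _) (abs_real_inner_le_norm g (v' - w))
          have hcb : ‖g‖ * ‖v' - w‖ ≤ ‖g‖ / c * Nm (v' - w) := by
            have h1 := hcl (v' - w)
            have h2 : ‖v' - w‖ ≤ Nm (v' - w) / c := by
              rw [le_div_iff₀ hc]; linarith
            calc ‖g‖ * ‖v' - w‖ ≤ ‖g‖ * (Nm (v' - w) / c) :=
                  mul_le_mul_of_nonneg_left h2 (norm_nonneg g)
              _ = ‖g‖ / c * Nm (v' - w) := by ring
          nlinarith
        have hlim : (-(ε / N) : ℝ) < liminf q (nhdsWithin w {w}ᶜ) :=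
          lt_of_lt_of_le (neg_neg_of_pos (by positivity)) hg
        have Hev := eventually_lt_of_lt_liminf hlim hbdd
        rw [eventually_nhdsWithin_iff, Metric.eventually_nhds_iff] at Hev
        obtain ⟨δ, hδ, Hδ⟩ := Hev
        set l : ℝ := min 1 (δ / (2 * ‖v - w‖)) with hl
        have hlpos : 0 < l := lt_min one_pos (by positivity)
        have hl1 : l ≤ 1 := min_le_left _ _
        have hlsmall : l * ‖v - w‖ < δ := by
          have hne := hnorm.ne'
          have h2 : l * ‖v - w‖ ≤ δ / 2 := by
            calc l * ‖v - w‖ ≤ δ / (2 * ‖v - w‖) * ‖v - w‖ :=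
                  mul_le_mul_of_nonneg_right (min_le_right _ _) (norm_nonneg _)
              _ = δ / 2 := by field_simp
          linarith
        set u : EuclideanSpace ℝ (Fin d) := w + l • (v - w) with hu
        have huw : u - w = l • (v - w) := by rw [hu]; abel
        have hune : u ≠ w := by
          intro h
          have : l • (v - w) = 0 := by rw [← huw, h, sub_self]
          exact hvw' (by simpa [smul_eq_zero, hlpos.ne'] using this)
        have hdist : dist u w < δ := by
          rw [dist_eq_norm, huw, norm_smul, Real.norm_eq_abs, abs_of_pos hlpos]
          exact hlsmall
        have Hq : -(ε / N) < q u := Hδ hdist (by simpa using hune)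
        have hNu : Nm (u - w) = l * N := by
          rw [huw, hNm.2.1, abs_of_pos hlpos]
        have hiu : (inner ℝ g (u - w) : ℝ) = l * ip := by
          rw [huw, real_inner_smul_right, hip]
        simp only [hq] at Hq
        rw [hNu, hiu] at Hq
        have hlN : 0 < l * N := mul_pos hlpos hN
        rw [lt_div_iff₀ hlN] at Hq
        have Hq2 : -(ε * l) < f u - f w - l * ip := by
          have he : -(ε / N) * (l * N) = -(ε * l) := by
            field_simp
          rwa [he] at Hq
        -- weak convexity along the segment
        have hseg : (1 - l) • w + (1 - (1 - l)) • v = u := by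
          rw [hu]; module
        have hwc' := hwc w (mem_univ w) v (mem_univ v) (1 - l) (by linarith) (by linarith)
        rw [hseg] at hwc'
        rw [hNm.sub_comm w v, ← hNdef] at hwc'
        have h3 : ρ * (1 - l) * (1 - (1 - l)) / 2 * N ^ 2 ≤ ρ * l / 2 * N ^ 2 := by
          nlinarith [mul_nonneg (mul_nonneg hρ (sq_nonneg l)) (sq_nonneg N)]
        have hwc2 : f u - f w ≤ l * (f v - f w) + ρ * l / 2 * N ^ 2 :=
          by linarith [hwc', h3]
        -- now everything is real arithmetic
        have h4 : l * ip < l * ((f v - f w + ρ / 2 * N ^ 2) + ε) := by nlinarith [Hq2, hwc2]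
        nlinarith [h4, hlpos]
      have := le_of_forall_pos_le_add key
      linarith
  · intro h w _ v _ l hl0 hl1
    set u : EuclideanSpace ℝ (Fin d) := l • w + (1 - l) • v with hu
    obtain ⟨g, hg⟩ := hsub u
    have h1 := h u w g hg
    have h2 := h u v g hg
    set M := Nm (w - v) with hM
    have hwu : w - u = (1 - l) • (w - v) := by rw [hu]; module
    have hvu : v - u = l • (v - w) := by rw [hu]; module
    have hNw : Nm (w - u) = (1 - l) * M := by
      rw [hwu, hNm.2.1, abs_of_nonneg (by linarith)]
    have hNv : Nm (v - u) = l * M := by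
      rw [hvu, hNm.2.1, abs_of_nonneg hl0, hM, hNm.sub_comm w v]
    set iw := (inner ℝ g (w - u) : ℝ) with hiw
    set iv := (inner ℝ g (v - u) : ℝ) with hiv
    have hinner : l * iw + (1 - l) * iv = 0 := by
      rw [hiw, hiv, ← real_inner_smul_right, ← real_inner_smul_right, ← inner_add_right]
      have hz : l • (w - u) + (1 - l) • (v - u) = 0 := by rw [hu]; module
      rw [hz, inner_zero_right]
    rw [hNw] at h1
    rw [hNv] at h2
    have ha := mul_le_mul_of_nonneg_left h1.le hl0
    have hb := mul_le_mul_of_nonneg_left h2.le (by linarith : (0:ℝ) ≤ 1 - l)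
    linarith [ha, hb, hinner]
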